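/- Let N ≥ 2 be an integer and let p, q be real numbers with q ≥ 1 > p > 0 and pq < 1. Let (u,v) be a positive radially symmetric solution of the system Δu = v^p, Δv = |∇u|^q in ℝ^N. Then for all r > 0: 0 ≤ r·v'(r)/v(r) ≤ (2+q)/(1−pq); N ≤ r·v(r)^p/u'(r) ≤ N + p(2+q)/(1−pq); and N + q ≤ r·u'(r)^q/v'(r) ≤ N − 2 + (2+q)/(1−pq). -/

import Mathlib

open MeasureTheory Set Filter

private lemma my_mono_Icc {a b : ℝ} (hab : a ≤ b) {f g : ℝ → ℝ}
    (hc : ContinuousOn f (Icc a b))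
    (hd : ∀ t ∈ Ioo a b, HasDerivAt f (g t) t)
    (h0 : ∀ t ∈ Ioo a b, 0 ≤ g t) : f a ≤ f b := by
  have h2 : DifferentiableOn ℝ f (interior (Icc a b)) := by
    rw [interior_Icc]
    exact fun t ht => (hd t ht).differentiableAt.differentiableWithinAt
  have h1 : ∀ t ∈ interior (Icc a b), 0 ≤ deriv f t := by
    rw [interior_Icc]; intro t ht; rw [(hd t ht).deriv]; exact h0 t ht
  exact monotoneOn_of_deriv_nonneg (convex_Icc a b) hc h2 h1
    (left_mem_Icc.2 hab) (right_mem_Icc.2 hab) hab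

private lemma my_strict_Icc {a b : ℝ} (hab : a < b) {f g : ℝ → ℝ}
    (hc : ContinuousOn f (Icc a b))
    (hd : ∀ t ∈ Ioo a b, HasDerivAt f (g t) t)
    (h0 : ∀ t ∈ Ioo a b, 0 < g t) : f a < f b := by
  have h1 : ∀ t ∈ interior (Icc a b), 0 < deriv f t := by
    rw [interior_Icc]; intro t ht; rw [(hd t ht).deriv]; exact h0 t ht
  exact strictMonoOn_of_deriv_pos (convex_Icc a b) hc h1
    (left_mem_Icc.2 hab.le) (right_mem_Icc.2 hab.le) hab

private lemma my_anti_Icc {a b : ℝ} (hab : a ≤ b) {f g : ℝ → ℝ}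
    (hd : ∀ t ∈ Icc a b, HasDerivAt f (g t) t)
    (h0 : ∀ t ∈ Icc a b, g t ≤ 0) : f b ≤ f a := by
  have hc : ContinuousOn f (Icc a b) :=
    fun t ht => (hd t ht).continuousAt.continuousWithinAt
  have h2 : DifferentiableOn ℝ f (interior (Icc a b)) := by
    rw [interior_Icc]
    exact fun t ht => (hd t (Ioo_subset_Icc_self ht)).differentiableAt.differentiableWithinAt
  have h1 : ∀ t ∈ interior (Icc a b), deriv f t ≤ 0 := by
    rw [interior_Icc]; intro t ht
    rw [(hd t (Ioo_subset_Icc_self ht)).deriv]; exact h0 t (Ioo_subset_Icc_self ht)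
  exact antitoneOn_of_deriv_nonpos (convex_Icc a b) hc h2 h1
    (left_mem_Icc.2 hab) (right_mem_Icc.2 hab) hab

private lemma my_mono_Icc' {a b : ℝ} (hab : a ≤ b) {f g : ℝ → ℝ}
    (hd : ∀ t ∈ Icc a b, HasDerivAt f (g t) t)
    (h0 : ∀ t ∈ Icc a b, 0 ≤ g t) : f a ≤ f b :=
  my_mono_Icc hab (fun t ht => (hd t ht).continuousAt.continuousWithinAt)
    (fun t ht => hd t (Ioo_subset_Icc_self ht)) (fun t ht => h0 t (Ioo_subset_Icc_self ht))

/-- `(u, v)` is a positive radially symmetric solution of `Δu = v^p`, `Δv = |∇u|^q`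
in the whole space `ℝ^N`, written in radial coordinates on `[0,∞)`. -/
def IsEntirePositiveRadialSolPow (N : ℕ) (p q : ℝ) (u v : ℝ → ℝ) : Prop :=
  ContDiffOn ℝ 2 u (Set.Ici 0) ∧ ContDiffOn ℝ 2 v (Set.Ici 0) ∧
  (∀ r ∈ Set.Ici (0:ℝ), 0 < u r ∧ 0 < v r) ∧
  deriv u 0 = 0 ∧ deriv v 0 = 0 ∧
  (∀ r ∈ Set.Ioi (0:ℝ),
    deriv (deriv u) r + ((N : ℝ) - 1) / r * deriv u r = v r ^ p) ∧
  (∀ r ∈ Set.Ioi (0:ℝ),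
    deriv (deriv v) r + ((N : ℝ) - 1) / r * deriv v r = |deriv u r| ^ q)

set_option maxHeartbeats 2000000 in
/-- A priori bounds on the quantities `Y = r v'/v`, `Z = r v^p/u'`, `W = r u'^q/v'`
associated to a positive radially symmetric entire solution of
`Δu = v^p`, `Δv = |∇u|^q` in `ℝ^N` when `q ≥ 1 > p > 0` and `pq < 1`. -/
theorem entire_quotient_bounds (N : ℕ) (hN : 2 ≤ N) (p q : ℝ)
    (hq : 1 ≤ q) (hp1 : p < 1) (hp : 0 < p) (hpq : p * q < 1)
    (u v : ℝ → ℝ) (huv : IsEntirePositiveRadialSolPow N p q u v) :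
    ∀ r : ℝ, 0 < r →
      (0 ≤ r * deriv v r / v r ∧ r * deriv v r / v r ≤ (2 + q) / (1 - p * q)) ∧
      ((N : ℝ) ≤ r * v r ^ p / deriv u r ∧
        r * v r ^ p / deriv u r ≤ (N : ℝ) + p * (2 + q) / (1 - p * q)) ∧
      ((N : ℝ) + q ≤ r * deriv u r ^ q / deriv v r ∧
        r * deriv u r ^ q / deriv v r ≤ (N : ℝ) - 2 + (2 + q) / (1 - p * q)) := by
  obtain ⟨hu2, hv2, hpos, hu'0, hv'0, hequ, heqv⟩ := huv
  set c : ℝ := (N : ℝ) with hcdef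
  have hc2 : (2:ℝ) ≤ c := by rw [hcdef]; exact_mod_cast hN
  have hvpos : ∀ t : ℝ, 0 ≤ t → 0 < v t := fun t ht => (hpos t ht).2
  -- regularity
  have huIoi : ContDiffOn ℝ 2 u (Ioi 0) := hu2.mono Ioi_subset_Ici_self
  have hvIoi : ContDiffOn ℝ 2 v (Ioi 0) := hv2.mono Ioi_subset_Ici_self
  have hdu : ∀ t ∈ Ioi (0:ℝ), HasDerivAt (deriv u) (deriv (deriv u) t) t := by
    intro t ht
    have h1 : ContDiffOn ℝ 1 (deriv u) (Ioi 0) :=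
      huIoi.deriv_of_isOpen isOpen_Ioi (by norm_num)
    exact ((h1.differentiableOn one_ne_zero).differentiableAt
      (isOpen_Ioi.mem_nhds ht)).hasDerivAt
  have hdv : ∀ t ∈ Ioi (0:ℝ), HasDerivAt (deriv v) (deriv (deriv v) t) t := by
    intro t ht
    have h1 : ContDiffOn ℝ 1 (deriv v) (Ioi 0) :=
      hvIoi.deriv_of_isOpen isOpen_Ioi (by norm_num)
    exact ((h1.differentiableOn one_ne_zero).differentiableAt
      (isOpen_Ioi.mem_nhds ht)).hasDerivAt
  have hu' : ∀ t ∈ Ioi (0:ℝ), HasDerivAt u (deriv u t) t := fun t ht =>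
    ((huIoi.differentiableOn (by norm_num)).differentiableAt
      (isOpen_Ioi.mem_nhds ht)).hasDerivAt
  have hv' : ∀ t ∈ Ioi (0:ℝ), HasDerivAt v (deriv v t) t := fun t ht =>
    ((hvIoi.differentiableOn (by norm_num)).differentiableAt
      (isOpen_Ioi.mem_nhds ht)).hasDerivAt
  have hUcont : ContinuousOn (derivWithin u (Ici 0)) (Ici 0) :=
    hu2.continuousOn_derivWithin (uniqueDiffOn_Ici 0) (by norm_num)
  have hVcont : ContinuousOn (derivWithin v (Ici 0)) (Ici 0) :=
    hv2.continuousOn_derivWithin (uniqueDiffOn_Ici 0) (by norm_num)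
  have hUu : ∀ t ∈ Ioi (0:ℝ), derivWithin u (Ici 0) t = deriv u t := fun t ht =>
    derivWithin_of_mem_nhds (Ici_mem_nhds ht)
  have hVv : ∀ t ∈ Ioi (0:ℝ), derivWithin v (Ici 0) t = deriv v t := fun t ht =>
    derivWithin_of_mem_nhds (Ici_mem_nhds ht)
  have hequ' : ∀ t ∈ Ioi (0:ℝ),
      deriv (deriv u) t = v t ^ p - (c - 1) / t * deriv u t := by
    intro t ht; have := hequ t ht; rw [hcdef]; linarith
  have heqv' : ∀ t ∈ Ioi (0:ℝ),
      deriv (deriv v) t = |deriv u t| ^ q - (c - 1) / t * deriv v t := by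
    intro t ht; have := heqv t ht; rw [hcdef]; linarith
  -- derivative of t^(c-1) * u'(t)
  have hF1 : ∀ t ∈ Ioi (0:ℝ),
      HasDerivAt (fun x => x ^ (c-1) * deriv u x) (t ^ (c-1) * v t ^ p) t := by
    intro t ht
    have ht0 : (0:ℝ) < t := ht
    have h1 : HasDerivAt (fun x : ℝ => x ^ (c-1)) ((c-1) * t ^ (c-1-1)) t :=
      Real.hasDerivAt_rpow_const (Or.inl ht0.ne')
    have h2 := (h1.mul (hdu t ht))
    refine (h2).congr_deriv ?_
    symm
    rw [hequ' t ht]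
    have e1 : t ^ (c-1-1) = t ^ (c-1) / t := by
      rw [Real.rpow_sub ht0, Real.rpow_one]
    rw [e1]
    field_simp
    ring
  have hF2 : ∀ t ∈ Ioi (0:ℝ),
      HasDerivAt (fun x => x ^ (c-1) * deriv v x) (t ^ (c-1) * |deriv u t| ^ q) t := by
    intro t ht
    have ht0 : (0:ℝ) < t := ht
    have h1 : HasDerivAt (fun x : ℝ => x ^ (c-1)) ((c-1) * t ^ (c-1-1)) t :=
      Real.hasDerivAt_rpow_const (Or.inl ht0.ne')
    have h2 := (h1.mul (hdv t ht))
    refine (h2).congr_deriv ?_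
    symm
    rw [heqv' t ht]
    have e1 : t ^ (c-1-1) = t ^ (c-1) / t := by
      rw [Real.rpow_sub ht0, Real.rpow_one]
    rw [e1]
    field_simp
    ring
  -- positivity of u'
  have hu'pos : ∀ t ∈ Ioi (0:ℝ), 0 < deriv u t := by
    intro r hr
    have hr0 : (0:ℝ) < r := hr
    have hc1 : c - 1 ≠ 0 := by norm_num; nlinarith
    have hcont : ContinuousOn (fun x => x ^ (c-1) * deriv u x) (Icc 0 r) := by
      have hg : ContinuousOn (fun x => x ^ (c-1) * derivWithin u (Ici 0) x) (Icc 0 r) :=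
        (Real.continuous_rpow_const (by nlinarith)).continuousOn.mul
          (hUcont.mono Icc_subset_Ici_self)
      apply hg.congr
      intro x hx
      rcases eq_or_lt_of_le hx.1 with h0 | h0
      · simp [← h0, Real.zero_rpow hc1]
      · simp only [hUu x h0]
    have hkey : (fun x => x ^ (c-1) * deriv u x) 0 <
        (fun x => x ^ (c-1) * deriv u x) r := by
      apply my_strict_Icc hr0 hcont (fun t ht => hF1 t ht.1)
      intro t ht
      exact mul_pos (Real.rpow_pos_of_pos ht.1 _)
        (Real.rpow_pos_of_pos (hvpos t ht.1.le) _)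
    simp only [Real.zero_rpow hc1, zero_mul] at hkey
    nlinarith [Real.rpow_pos_of_pos hr0 (c-1)]
  -- positivity of v'
  have hv'pos : ∀ t ∈ Ioi (0:ℝ), 0 < deriv v t := by
    intro r hr
    have hr0 : (0:ℝ) < r := hr
    have hc1 : c - 1 ≠ 0 := by nlinarith
    have hcont : ContinuousOn (fun x => x ^ (c-1) * deriv v x) (Icc 0 r) := by
      have hg : ContinuousOn (fun x => x ^ (c-1) * derivWithin v (Ici 0) x) (Icc 0 r) :=
        (Real.continuous_rpow_const (by nlinarith)).continuousOn.mul
          (hVcont.mono Icc_subset_Ici_self)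
      apply hg.congr
      intro x hx
      rcases eq_or_lt_of_le hx.1 with h0 | h0
      · simp [← h0, Real.zero_rpow hc1]
      · simp only [hVv x h0]
    have hkey : (fun x => x ^ (c-1) * deriv v x) 0 <
        (fun x => x ^ (c-1) * deriv v x) r := by
      apply my_strict_Icc hr0 hcont (fun t ht => hF2 t ht.1)
      intro t ht
      exact mul_pos (Real.rpow_pos_of_pos ht.1 _)
        (Real.rpow_pos_of_pos (abs_pos.2 (hu'pos t ht.1).ne') _)
    simp only [Real.zero_rpow hc1, zero_mul] at hkey
    nlinarith [Real.rpow_pos_of_pos hr0 (c-1)]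
  -- remove absolute values
  have habs : ∀ t ∈ Ioi (0:ℝ), |deriv u t| = deriv u t := fun t ht =>
    abs_of_pos (hu'pos t ht)
  have heqv'' : ∀ t ∈ Ioi (0:ℝ),
      deriv (deriv v) t = (deriv u t) ^ q - (c - 1) / t * deriv v t := by
    intro t ht; rw [heqv' t ht, habs t ht]
  have hF2' : ∀ t ∈ Ioi (0:ℝ),
      HasDerivAt (fun x => x ^ (c-1) * deriv v x) (t ^ (c-1) * (deriv u t) ^ q) t := by
    intro t ht
    have := hF2 t ht
    rwa [habs t ht] at this
  -- v is monotone on [0,∞)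
  have hvmono : MonotoneOn v (Ici 0) := by
    apply monotoneOn_of_deriv_nonneg (convex_Ici 0) (hv2.continuousOn)
    · rw [interior_Ici]
      exact fun t ht => (hv' t ht).differentiableAt.differentiableWithinAt
    · rw [interior_Ici]
      exact fun t ht => (hv'pos t ht).le
  -- lower bound Z ≥ N :  c * u' ≤ r * v^p
  have hZ1 : ∀ r ∈ Ioi (0:ℝ), c * deriv u r ≤ r * v r ^ p := by
    intro r hr
    have hr0 : (0:ℝ) < r := hr
    have hc1 : c - 1 ≠ 0 := by nlinarith
    have hc0 : c ≠ 0 := by nlinarith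
    set f : ℝ → ℝ := fun x => x ^ c * v x ^ p - c * (x ^ (c-1) * deriv u x) with hf
    have hcont : ContinuousOn f (Icc 0 r) := by
      have hg : ContinuousOn
          (fun x => x ^ c * v x ^ p - c * (x ^ (c-1) * derivWithin u (Ici 0) x))
          (Icc 0 r) := by
        apply ContinuousOn.sub
        · exact (Real.continuous_rpow_const (by nlinarith)).continuousOn.mul
            ((hv2.continuousOn.mono Icc_subset_Ici_self).rpow_const
              (fun x hx => Or.inr hp.le))
        · exact ((Real.continuous_rpow_const (by nlinarith)).continuousOn.mul
            (hUcont.mono Icc_subset_Ici_self)).const_smul c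
      apply hg.congr
      intro x hx
      rcases eq_or_lt_of_le hx.1 with h0 | h0
      · simp [hf, ← h0, Real.zero_rpow hc1, Real.zero_rpow hc0]
      · simp only [hf, hUu x h0]
    have hder : ∀ t ∈ Ioo 0 r,
        HasDerivAt f (t ^ c * (deriv v t * p * v t ^ (p-1))) t := by
      intro t ht
      have ht0 : (0:ℝ) < t := ht.1
      have h1 : HasDerivAt (fun x : ℝ => x ^ c) (c * t ^ (c-1)) t :=
        Real.hasDerivAt_rpow_const (Or.inl ht0.ne')
      have h2 : HasDerivAt (fun x => v x ^ p) (deriv v t * p * v t ^ (p-1)) t :=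
        (hv' t ht0).rpow_const (Or.inl (hvpos t ht0.le).ne')
      have h3 := (h1.mul h2).sub ((hF1 t ht0).const_mul c)
      refine (h3).congr_deriv ?_
      symm
      ring
    have hmain : f 0 ≤ f r := by
      apply my_mono_Icc hr0.le hcont hder
      intro t ht
      have ht0 : (0:ℝ) < t := ht.1
      have h3 := hv'pos t ht0
      have h4 := Real.rpow_pos_of_pos ht0 c
      have h5 := Real.rpow_pos_of_pos (hvpos t ht0.le) (p-1)
      exact (mul_pos h4 (mul_pos (mul_pos h3 hp) h5)).le
    have hf0 : f 0 = 0 := by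
      simp [hf, Real.zero_rpow hc1, Real.zero_rpow hc0]
    rw [hf0] at hmain
    simp only [hf] at hmain
    have e2 : r ^ c = r ^ (c-1) * r := by
      rw [← Real.rpow_add_one hr0.ne' (c-1)]; ring_nf
    rw [e2] at hmain
    have h6 := Real.rpow_pos_of_pos hr0 (c-1)
    have h7 : r ^ (c-1) * (c * deriv u r) ≤ r ^ (c-1) * (r * v r ^ p) := by nlinarith [hmain]
    exact le_of_mul_le_mul_left h7 h6
  -- u' is monotone (u'' ≥ 0)
  have hu'' : ∀ t ∈ Ioi (0:ℝ), 0 ≤ deriv (deriv u) t := by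
    intro t ht
    have ht0 : (0:ℝ) < t := ht
    rw [hequ' t ht]
    have h1 := hZ1 t ht
    have h2 := hu'pos t ht
    have h3 := Real.rpow_pos_of_pos (hvpos t ht0.le) p
    rw [sub_nonneg, div_mul_eq_mul_div, div_le_iff₀ ht0]
    nlinarith
  have hu'mono : ∀ s t : ℝ, 0 < s → s ≤ t → deriv u s ≤ deriv u t := by
    intro s t hs hst
    apply my_mono_Icc' hst (g := fun x => deriv (deriv u) x)
    · exact fun x hx => hdu x (lt_of_lt_of_le hs hx.1)
    · exact fun x hx => hu'' x (lt_of_lt_of_le hs hx.1)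
  -- lower bound W ≥ N + q :  (c+q) * v' ≤ r * u'^q
  have hW1 : ∀ r ∈ Ioi (0:ℝ), (c + q) * deriv v r ≤ r * (deriv u r) ^ q := by
    intro r hr
    have hr0 : (0:ℝ) < r := hr
    have hc1 : c - 1 ≠ 0 := by nlinarith
    have hc0 : c ≠ 0 := by nlinarith
    set f : ℝ → ℝ := fun x => x ^ c * (deriv u x) ^ q - (c+q) * (x ^ (c-1) * deriv v x)
      with hf
    have hcont : ContinuousOn f (Icc 0 r) := by
      have hg : ContinuousOn
          (fun x => x ^ c * (derivWithin u (Ici 0) x) ^ q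
            - (c+q) * (x ^ (c-1) * derivWithin v (Ici 0) x)) (Icc 0 r) := by
        apply ContinuousOn.sub
        · exact (Real.continuous_rpow_const (by nlinarith)).continuousOn.mul
            ((hUcont.mono Icc_subset_Ici_self).rpow_const
              (fun x hx => Or.inr (by linarith)))
        · exact ((Real.continuous_rpow_const (by nlinarith)).continuousOn.mul
            (hVcont.mono Icc_subset_Ici_self)).const_smul (c+q)
      apply hg.congr
      intro x hx
      rcases eq_or_lt_of_le hx.1 with h0 | h0
      · simp [hf, ← h0, Real.zero_rpow hc1, Real.zero_rpow hc0]
      · simp only [hf, hUu x h0, hVv x h0]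
    have hder : ∀ t ∈ Ioo 0 r, HasDerivAt f
        (q * t ^ (c-1) * (deriv u t) ^ (q-1) * (t * deriv (deriv u) t - deriv u t)) t := by
      intro t ht
      have ht0 : (0:ℝ) < t := ht.1
      have h1 : HasDerivAt (fun x : ℝ => x ^ c) (c * t ^ (c-1)) t :=
        Real.hasDerivAt_rpow_const (Or.inl ht0.ne')
      have h2 : HasDerivAt (fun x => (deriv u x) ^ q)
          (deriv (deriv u) t * q * (deriv u t) ^ (q-1)) t :=
        (hdu t ht0).rpow_const (Or.inl (hu'pos t ht0).ne')
      have h3 := (h1.mul h2).sub ((hF2' t ht0).const_mul (c+q))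
      refine (h3).congr_deriv ?_
      symm
      have e1 : t ^ c = t ^ (c-1) * t := by
        rw [← Real.rpow_add_one ht0.ne' (c-1)]; ring_nf
      have e2 : (deriv u t) ^ q = (deriv u t) ^ (q-1) * deriv u t := by
        rw [← Real.rpow_add_one (hu'pos t ht0).ne' (q-1)]; ring_nf
      rw [e1, e2]
      ring
    have hmain : f 0 ≤ f r := by
      apply my_mono_Icc hr0.le hcont hder
      intro t ht
      have ht0 : (0:ℝ) < t := ht.1
      have h1 := hZ1 t ht.1
      have h2 := hu'pos t ht.1
      have h3 := hu'' t ht.1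
      have h4 : t * deriv (deriv u) t - deriv u t ≥ 0 := by
        rw [hequ' t ht.1]
        have h5 := Real.rpow_pos_of_pos (hvpos t ht0.le) p
        have e3 : t * (v t ^ p - (c-1)/t * deriv u t) = t * v t ^ p - (c-1) * deriv u t := by
          field_simp
        rw [e3]
        nlinarith
      have h6 := Real.rpow_pos_of_pos ht0 (c-1)
      have h7 := Real.rpow_pos_of_pos h2 (q-1)
      have hq0 : (0:ℝ) < q := by linarith
      exact mul_nonneg (mul_nonneg (mul_nonneg hq0.le h6.le) h7.le) h4
    have hf0 : f 0 = 0 := by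
      simp [hf, Real.zero_rpow hc1, Real.zero_rpow hc0]
    rw [hf0] at hmain
    simp only [hf] at hmain
    have e2 : r ^ c = r ^ (c-1) * r := by
      rw [← Real.rpow_add_one hr0.ne' (c-1)]; ring_nf
    rw [e2] at hmain
    have h6 := Real.rpow_pos_of_pos hr0 (c-1)
    have h7 : r ^ (c-1) * ((c+q) * deriv v r) ≤ r ^ (c-1) * (r * (deriv u r) ^ q) := by
      ring_nf at hmain ⊢
      linarith
    exact le_of_mul_le_mul_left h7 h6
  -- step (a)
  have hA : ∀ r0 : ℝ, 0 < r0 → ∀ K : ℝ,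
      (∀ s ∈ Ioc (0:ℝ) r0, s * deriv v s ≤ K * v s) →
      ∀ s t : ℝ, 0 < s → s ≤ t → t ≤ r0 → v t * t ^ (-K) ≤ v s * s ^ (-K) := by
    intro r0 hr0 K hP s t hs hst htr
    apply my_anti_Icc hst
      (g := fun x => x ^ (-K-1) * (x * deriv v x - K * v x))
    · intro x hx
      have hx0 : (0:ℝ) < x := lt_of_lt_of_le hs hx.1
      have h1 := (hv' x hx0).mul
        (Real.hasDerivAt_rpow_const (x := x) (p := -K) (Or.inl hx0.ne'))
      refine (h1).congr_deriv ?_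
      symm
      have e1 : x ^ (-K) = x ^ (-K-1) * x := by
        rw [← Real.rpow_add_one hx0.ne' (-K-1)]; ring_nf
      rw [e1]; ring
    · intro x hx
      have hx0 : (0:ℝ) < x := lt_of_lt_of_le hs hx.1
      have h2 := hP x ⟨hx0, le_trans hx.2 htr⟩
      have h3 := Real.rpow_pos_of_pos hx0 (-K-1)
      exact mul_nonpos_iff.2 (Or.inl ⟨h3.le, by linarith⟩)
  -- step (b)
  have hB : ∀ r0 : ℝ, 0 < r0 → ∀ K : ℝ, 0 ≤ K →
      (∀ s ∈ Ioc (0:ℝ) r0, s * deriv v s ≤ K * v s) →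
      ∀ r ∈ Ioc (0:ℝ) r0, r * v r ^ p ≤ (c + p*K) * deriv u r := by
    intro r0 hr0 K hK hP r hrm
    obtain ⟨hr0', hrr0⟩ := hrm
    have hA' := hA r0 hr0 K hP
    have hpK : 0 ≤ p*K := mul_nonneg hp.le hK
    have hcpK : (0:ℝ) < c + p*K := by linarith
    have hc1 : c - 1 ≠ 0 := by
      have : (0:ℝ) < c - 1 := by linarith
      exact this.ne'
    set C : ℝ := v r ^ p * r ^ (-(p*K)) with hCdef
    set f : ℝ → ℝ := fun x => (c + p*K) * (x ^ (c-1) * deriv u x) - C * x ^ (c+p*K)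
      with hf
    have hcont : ContinuousOn f (Icc 0 r) := by
      have hg : ContinuousOn
          (fun x => (c + p*K) * (x ^ (c-1) * derivWithin u (Ici 0) x) - C * x ^ (c+p*K))
          (Icc 0 r) := by
        apply ContinuousOn.sub
        · exact ((Real.continuous_rpow_const (by linarith)).continuousOn.mul
            (hUcont.mono Icc_subset_Ici_self)).const_smul (c+p*K)
        · exact ((Real.continuous_rpow_const (by linarith)).continuousOn).const_smul C
      apply hg.congr
      intro x hx
      rcases eq_or_lt_of_le hx.1 with h0 | h0
      · simp [hf, ← h0, Real.zero_rpow hc1, Real.zero_rpow hcpK.ne']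
      · simp only [hf, hUu x h0]
    have hder : ∀ t ∈ Ioo 0 r, HasDerivAt f
        ((c + p*K) * (t ^ (c-1) * v t ^ p - C * t ^ (c+p*K-1))) t := by
      intro t ht
      have ht0 : (0:ℝ) < t := ht.1
      have h1 := (hF1 t ht0).const_mul (c+p*K)
      have h2 := (Real.hasDerivAt_rpow_const (x := t) (p := c+p*K)
        (Or.inl ht0.ne')).const_mul C
      refine (h1.sub h2).congr_deriv ?_
      symm
      ring
    have hmain : f 0 ≤ f r := by
      apply my_mono_Icc hr0'.le hcont hder
      intro t ht
      have ht0 : (0:ℝ) < t := ht.1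
      have key : v r ^ p * r ^ (-(p*K)) * t ^ (p*K) ≤ v t ^ p := by
        have h3 := hA' t r ht0 ht.2.le hrr0
        have h4 : (v r * r ^ (-K)) ^ p ≤ (v t * t ^ (-K)) ^ p :=
          Real.rpow_le_rpow
            (mul_nonneg (hvpos r hr0'.le).le (Real.rpow_nonneg hr0'.le _)) h3 hp.le
        rw [Real.mul_rpow (hvpos r hr0'.le).le (Real.rpow_nonneg hr0'.le _),
            Real.mul_rpow (hvpos t ht0.le).le (Real.rpow_nonneg ht0.le _),
            ← Real.rpow_mul hr0'.le, ← Real.rpow_mul ht0.le] at h4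
        have e2 : -K * p = -(p*K) := by ring
        rw [e2] at h4
        have h5 := mul_le_mul_of_nonneg_right h4 (Real.rpow_nonneg ht0.le (p*K))
        have e3 : v t ^ p * t ^ (-(p*K)) * t ^ (p*K) = v t ^ p := by
          rw [mul_assoc, ← Real.rpow_add ht0]; simp
        rwa [e3] at h5
      have key2 : C * t ^ (c+p*K-1) ≤ t ^ (c-1) * v t ^ p := by
        have e1 : t ^ (c+p*K-1) = t ^ (p*K) * t ^ (c-1) := by
          rw [← Real.rpow_add ht0]; ring_nf
        rw [hCdef, e1]
        calc v r ^ p * r ^ (-(p*K)) * (t ^ (p*K) * t ^ (c-1))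
            = (v r ^ p * r ^ (-(p*K)) * t ^ (p*K)) * t ^ (c-1) := by ring
          _ ≤ v t ^ p * t ^ (c-1) :=
              mul_le_mul_of_nonneg_right key (Real.rpow_nonneg ht0.le _)
          _ = t ^ (c-1) * v t ^ p := by ring
      exact mul_nonneg hcpK.le (by linarith [key2])
    have hf0 : f 0 = 0 := by
      simp [hf, Real.zero_rpow hc1, Real.zero_rpow hcpK.ne']
    rw [hf0] at hmain
    simp only [hf] at hmain
    have e3 : C * r ^ (c+p*K) = r ^ (c-1) * (r * v r ^ p) := by
      rw [hCdef]
      rw [mul_assoc, ← Real.rpow_add hr0']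
      have e4 : -(p*K) + (c+p*K) = c := by ring
      rw [e4]
      have e5 : r ^ c = r ^ (c-1) * r := by
        rw [← Real.rpow_add_one hr0'.ne' (c-1)]; ring_nf
      rw [e5]
      ring
    rw [e3] at hmain
    have h6 := Real.rpow_pos_of_pos hr0' (c-1)
    have h7 : r ^ (c-1) * (r * v r ^ p) ≤ r ^ (c-1) * ((c+p*K) * deriv u r) := by
      ring_nf at hmain ⊢
      linarith
    exact le_of_mul_le_mul_left h7 h6
  -- step (c)
  have hCC : ∀ r0 : ℝ, 0 < r0 → ∀ K : ℝ, 0 ≤ K →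
      (∀ s ∈ Ioc (0:ℝ) r0, s * deriv v s ≤ K * v s) →
      ∀ s t : ℝ, 0 < s → s ≤ t → t ≤ r0 →
      deriv u t * t ^ (-(1+p*K)) ≤ deriv u s * s ^ (-(1+p*K)) := by
    intro r0 hr0 K hK hP s t hs hst htr
    apply my_anti_Icc hst
      (g := fun x => x ^ (-(1+p*K)-1) * (x * deriv (deriv u) x - (1+p*K) * deriv u x))
    · intro x hx
      have hx0 : (0:ℝ) < x := lt_of_lt_of_le hs hx.1
      have h1 := (hdu x hx0).mul
        (Real.hasDerivAt_rpow_const (x := x) (p := -(1+p*K)) (Or.inl hx0.ne'))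
      refine (h1).congr_deriv ?_
      symm
      have e1 : x ^ (-(1+p*K)) = x ^ (-(1+p*K)-1) * x := by
        rw [← Real.rpow_add_one hx0.ne' (-(1+p*K)-1)]; ring_nf
      rw [e1]; ring
    · intro x hx
      have hx0 : (0:ℝ) < x := lt_of_lt_of_le hs hx.1
      have h2 := hB r0 hr0 K hK hP x ⟨hx0, le_trans hx.2 htr⟩
      have h3 := Real.rpow_pos_of_pos hx0 (-(1+p*K)-1)
      apply mul_nonpos_iff.2
      apply Or.inl
      refine ⟨h3.le, ?_⟩
      have e3 : x * deriv (deriv u) x = x * v x ^ p - (c-1) * deriv u x := by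
        rw [hequ' x hx0]; field_simp
      rw [e3]
      linarith
  -- step (d)
  have hD : ∀ r0 : ℝ, 0 < r0 → ∀ K : ℝ, 0 ≤ K →
      (∀ s ∈ Ioc (0:ℝ) r0, s * deriv v s ≤ K * v s) →
      ∀ r ∈ Ioc (0:ℝ) r0, r * (deriv u r) ^ q ≤ (c + q*(1+p*K)) * deriv v r := by
    intro r0 hr0 K hK hP r hrm
    obtain ⟨hr0', hrr0⟩ := hrm
    have hC' := hCC r0 hr0 K hK hP
    have hpK : 0 ≤ p*K := mul_nonneg hp.le hK
    have hm : (0:ℝ) < c + q*(1+p*K) := by nlinarith [mul_nonneg (by linarith : (0:ℝ) ≤ q) (by linarith : (0:ℝ) ≤ 1+p*K)]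
    have hc1 : c - 1 ≠ 0 := by
      have : (0:ℝ) < c - 1 := by linarith
      exact this.ne'
    have hur := hu'pos r hr0'
    set C : ℝ := (deriv u r) ^ q * r ^ (-(q*(1+p*K))) with hCdef
    set f : ℝ → ℝ := fun x =>
      (c + q*(1+p*K)) * (x ^ (c-1) * deriv v x) - C * x ^ (c+q*(1+p*K)) with hf
    have hcont : ContinuousOn f (Icc 0 r) := by
      have hg : ContinuousOn
          (fun x => (c + q*(1+p*K)) * (x ^ (c-1) * derivWithin v (Ici 0) x)
            - C * x ^ (c+q*(1+p*K))) (Icc 0 r) := by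
        apply ContinuousOn.sub
        · exact ((Real.continuous_rpow_const (by linarith)).continuousOn.mul
            (hVcont.mono Icc_subset_Ici_self)).const_smul (c+q*(1+p*K))
        · exact ((Real.continuous_rpow_const (le_of_lt hm)).continuousOn).const_smul C
      apply hg.congr
      intro x hx
      rcases eq_or_lt_of_le hx.1 with h0 | h0
      · simp [hf, ← h0, Real.zero_rpow hc1, Real.zero_rpow hm.ne']
      · simp only [hf, hVv x h0]
    have hder : ∀ t ∈ Ioo 0 r, HasDerivAt f
        ((c + q*(1+p*K)) * (t ^ (c-1) * (deriv u t) ^ q - C * t ^ (c+q*(1+p*K)-1))) t := by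
      intro t ht
      have ht0 : (0:ℝ) < t := ht.1
      have h1 := (hF2' t ht0).const_mul (c+q*(1+p*K))
      have h2 := (Real.hasDerivAt_rpow_const (x := t) (p := c+q*(1+p*K))
        (Or.inl ht0.ne')).const_mul C
      refine (h1.sub h2).congr_deriv ?_
      symm
      ring
    have hmain : f 0 ≤ f r := by
      apply my_mono_Icc hr0'.le hcont hder
      intro t ht
      have ht0 : (0:ℝ) < t := ht.1
      have hut := hu'pos t ht0
      have key : (deriv u r) ^ q * r ^ (-(q*(1+p*K))) * t ^ (q*(1+p*K))
          ≤ (deriv u t) ^ q := by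
        have h3 := hC' t r ht0 ht.2.le hrr0
        have h4 : (deriv u r * r ^ (-(1+p*K))) ^ q
            ≤ (deriv u t * t ^ (-(1+p*K))) ^ q :=
          Real.rpow_le_rpow
            (mul_nonneg hur.le (Real.rpow_nonneg hr0'.le _)) h3 (by linarith)
        rw [Real.mul_rpow hur.le (Real.rpow_nonneg hr0'.le _),
            Real.mul_rpow hut.le (Real.rpow_nonneg ht0.le _),
            ← Real.rpow_mul hr0'.le, ← Real.rpow_mul ht0.le] at h4
        have e2 : -(1+p*K) * q = -(q*(1+p*K)) := by ring
        rw [e2] at h4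
        have h5 := mul_le_mul_of_nonneg_right h4 (Real.rpow_nonneg ht0.le (q*(1+p*K)))
        have e3 : (deriv u t) ^ q * t ^ (-(q*(1+p*K))) * t ^ (q*(1+p*K))
            = (deriv u t) ^ q := by
          rw [mul_assoc, ← Real.rpow_add ht0]; simp
        rwa [e3] at h5
      have key2 : C * t ^ (c+q*(1+p*K)-1) ≤ t ^ (c-1) * (deriv u t) ^ q := by
        have e1 : t ^ (c+q*(1+p*K)-1) = t ^ (q*(1+p*K)) * t ^ (c-1) := by
          rw [← Real.rpow_add ht0]; ring_nf
        rw [hCdef, e1]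
        calc (deriv u r) ^ q * r ^ (-(q*(1+p*K))) * (t ^ (q*(1+p*K)) * t ^ (c-1))
            = ((deriv u r) ^ q * r ^ (-(q*(1+p*K))) * t ^ (q*(1+p*K))) * t ^ (c-1) := by
              ring
          _ ≤ (deriv u t) ^ q * t ^ (c-1) :=
              mul_le_mul_of_nonneg_right key (Real.rpow_nonneg ht0.le _)
          _ = t ^ (c-1) * (deriv u t) ^ q := by ring
      exact mul_nonneg hm.le (by linarith [key2])
    have hf0 : f 0 = 0 := by
      simp [hf, Real.zero_rpow hc1, Real.zero_rpow hm.ne']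
    rw [hf0] at hmain
    simp only [hf] at hmain
    have e3 : C * r ^ (c+q*(1+p*K)) = r ^ (c-1) * (r * (deriv u r) ^ q) := by
      rw [hCdef]
      rw [mul_assoc, ← Real.rpow_add hr0']
      have e4 : -(q*(1+p*K)) + (c+q*(1+p*K)) = c := by ring
      rw [e4]
      have e5 : r ^ c = r ^ (c-1) * r := by
        rw [← Real.rpow_add_one hr0'.ne' (c-1)]; ring_nf
      rw [e5]
      ring
    rw [e3] at hmain
    have h6 := Real.rpow_pos_of_pos hr0' (c-1)
    have h7 : r ^ (c-1) * (r * (deriv u r) ^ q)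
        ≤ r ^ (c-1) * ((c+q*(1+p*K)) * deriv v r) := by
      ring_nf at hmain ⊢
      linarith
    exact le_of_mul_le_mul_left h7 h6
  -- step (e)
  have hE : ∀ r0 : ℝ, 0 < r0 → ∀ K : ℝ, 0 ≤ K →
      (∀ s ∈ Ioc (0:ℝ) r0, s * deriv v s ≤ K * v s) →
      ∀ s t : ℝ, 0 < s → s ≤ t → t ≤ r0 →
      deriv v t * t ^ (-(1+q*(1+p*K))) ≤ deriv v s * s ^ (-(1+q*(1+p*K))) := by
    intro r0 hr0 K hK hP s t hs hst htr
    apply my_anti_Icc hst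
      (g := fun x => x ^ (-(1+q*(1+p*K))-1)
        * (x * deriv (deriv v) x - (1+q*(1+p*K)) * deriv v x))
    · intro x hx
      have hx0 : (0:ℝ) < x := lt_of_lt_of_le hs hx.1
      have h1 := (hdv x hx0).mul
        (Real.hasDerivAt_rpow_const (x := x) (p := -(1+q*(1+p*K))) (Or.inl hx0.ne'))
      refine (h1).congr_deriv ?_
      symm
      have e1 : x ^ (-(1+q*(1+p*K))) = x ^ (-(1+q*(1+p*K))-1) * x := by
        rw [← Real.rpow_add_one hx0.ne' (-(1+q*(1+p*K))-1)]; ring_nf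
      rw [e1]; ring
    · intro x hx
      have hx0 : (0:ℝ) < x := lt_of_lt_of_le hs hx.1
      have h2 := hD r0 hr0 K hK hP x ⟨hx0, le_trans hx.2 htr⟩
      have h3 := Real.rpow_pos_of_pos hx0 (-(1+q*(1+p*K))-1)
      apply mul_nonpos_iff.2
      apply Or.inl
      refine ⟨h3.le, ?_⟩
      have e3 : x * deriv (deriv v) x = x * (deriv u x) ^ q - (c-1) * deriv v x := by
        rw [heqv'' x hx0]; field_simp
      rw [e3]
      linarith
  -- bootstrap step (f)
  have hboot : ∀ r0 : ℝ, 0 < r0 → ∀ K : ℝ, 0 ≤ K →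
      (∀ s ∈ Ioc (0:ℝ) r0, s * deriv v s ≤ K * v s) →
      ∀ s ∈ Ioc (0:ℝ) r0, s * deriv v s ≤ (2 + q + p*q*K) * v s := by
    intro r0 hr0 K hK hP s hsm
    obtain ⟨hs0, hsr0⟩ := hsm
    have hpK : 0 ≤ p*K := mul_nonneg hp.le hK
    set β : ℝ := 1 + q*(1+p*K) with hβ
    have hβ2 : (2:ℝ) ≤ β + 1 := by nlinarith [mul_nonneg (by linarith : (0:ℝ) ≤ q) hpK]
    have hβpos : (0:ℝ) < β + 1 := by linarith
    set C3 : ℝ := deriv v s * s ^ (-β) with hC3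
    set f : ℝ → ℝ := fun x => (β+1) * v x - C3 * x ^ (β+1) with hf
    have hcont : ContinuousOn f (Icc 0 s) := by
      apply ContinuousOn.sub
      · exact (hv2.continuousOn.mono Icc_subset_Ici_self).const_smul (β+1)
      · exact ((Real.continuous_rpow_const hβpos.le).continuousOn).const_smul C3
    have hder : ∀ t ∈ Ioo 0 s, HasDerivAt f ((β+1) * (deriv v t - C3 * t ^ β)) t := by
      intro t ht
      have ht0 : (0:ℝ) < t := ht.1
      have h1 := (hv' t ht0).const_mul (β+1)
      have h2 := (Real.hasDerivAt_rpow_const (x := t) (p := β+1)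
        (Or.inl ht0.ne')).const_mul C3
      refine (h1.sub h2).congr_deriv ?_
      symm
      have e1 : β + 1 - 1 = β := by ring
      rw [e1]
      ring
    have hmain : f 0 ≤ f s := by
      apply my_mono_Icc hs0.le hcont hder
      intro t ht
      have ht0 : (0:ℝ) < t := ht.1
      have h3 := hE r0 hr0 K hK hP t s ht0 ht.2.le hsr0
      rw [← hβ] at h3
      have h4 := mul_le_mul_of_nonneg_right h3 (Real.rpow_nonneg ht0.le β)
      rw [← hC3] at h4
      have e2 : deriv v t * t ^ (-β) * t ^ β = deriv v t := by
        rw [mul_assoc, ← Real.rpow_add ht0]; simp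
      rw [e2] at h4
      exact mul_nonneg hβpos.le (by linarith [h4])
    have hf0 : f 0 = (β+1) * v 0 := by
      simp [hf, Real.zero_rpow hβpos.ne']
    rw [hf0] at hmain
    simp only [hf, hC3] at hmain
    have e3 : deriv v s * s ^ (-β) * s ^ (β+1) = s * deriv v s := by
      rw [mul_assoc, ← Real.rpow_add hs0]
      have e4 : -β + (β+1) = 1 := by ring
      rw [e4, Real.rpow_one]
      ring
    rw [e3] at hmain
    have hv0 := hvpos 0 le_rfl
    have e5 : β + 1 = 2 + q + p*q*K := by rw [hβ]; ring
    have h5 : (β+1) * v 0 ≥ 0 := by positivity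
    rw [← e5]
    linarith [hmain, h5]
  -- the fundamental bound Y ≤ M
  have h1pq : (0:ℝ) < 1 - p*q := by linarith
  have hpq0 : (0:ℝ) ≤ p*q := by positivity
  set M : ℝ := (2+q)/(1-p*q) with hM
  have hMnn : 0 ≤ M := div_nonneg (by linarith) h1pq.le
  have hYM : ∀ r0 : ℝ, 0 < r0 → ∀ s ∈ Ioc (0:ℝ) r0,
      s * deriv v s ≤ M * v s := by
    intro r0 hr0
    have hu'r0 := hu'pos r0 hr0
    have hv0 := hvpos 0 le_rfl
    have hcq : (0:ℝ) < c + q := by linarith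
    set K0 : ℝ := r0 * r0 * (deriv u r0) ^ q / ((c+q) * v 0) with hK0def
    have hK0 : 0 ≤ K0 := by
      apply div_nonneg
      · exact mul_nonneg (mul_nonneg hr0.le hr0.le) (Real.rpow_nonneg hu'r0.le q)
      · exact mul_nonneg hcq.le hv0.le
    have hP0 : ∀ s ∈ Ioc (0:ℝ) r0, s * deriv v s ≤ K0 * v s := by
      intro s hs
      have hs0 := hs.1
      have h1 := hW1 s hs.1
      have h2 : deriv u s ≤ deriv u r0 := hu'mono s r0 hs0 hs.2
      have h3 : (deriv u s) ^ q ≤ (deriv u r0) ^ q :=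
        Real.rpow_le_rpow (hu'pos s hs0).le h2 (by linarith)
      have h4 : v 0 ≤ v s := hvmono (mem_Ici.2 le_rfl) (mem_Ici.2 hs0.le) hs0.le
      have e1 : K0 * ((c+q) * v 0) = r0 * r0 * (deriv u r0) ^ q := by
        rw [hK0def]
        field_simp
      have h6 : s * s * (deriv u s) ^ q ≤ r0 * r0 * (deriv u r0) ^ q := by
        have h61 : s * s ≤ r0 * r0 := mul_le_mul hs.2 hs.2 hs0.le hr0.le
        exact mul_le_mul h61 h3 (Real.rpow_nonneg (hu'pos s hs0).le q)
          (mul_nonneg hr0.le hr0.le)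
      have h7 : (c+q) * (s * deriv v s) ≤ (c+q) * (K0 * v s) := by
        calc (c+q) * (s * deriv v s) = s * ((c+q) * deriv v s) := by ring
          _ ≤ s * (s * (deriv u s) ^ q) := mul_le_mul_of_nonneg_left h1 hs0.le
          _ = s * s * (deriv u s) ^ q := by ring
          _ ≤ r0 * r0 * (deriv u r0) ^ q := h6
          _ = K0 * ((c+q) * v 0) := e1.symm
          _ ≤ K0 * ((c+q) * v s) :=
              mul_le_mul_of_nonneg_left (mul_le_mul_of_nonneg_left h4 hcq.le) hK0
          _ = (c+q) * (K0 * v s) := by ring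
      exact le_of_mul_le_mul_left h7 hcq
    -- iterate the bootstrap
    set a : ℕ → ℝ := fun n => M + (p*q)^n * (K0 - M) with ha
    have hastep : ∀ n, 2 + q + p*q*(a n) = a (n+1) := by
      intro n
      simp only [ha, hM]
      have hX : (2+q)/(1-p*q) * (1-p*q) = 2+q := div_mul_cancel₀ _ h1pq.ne'
      linear_combination -hX
    have haM : ∀ n, 0 ≤ a n ∧ ∀ s ∈ Ioc (0:ℝ) r0, s * deriv v s ≤ a n * v s := by
      intro n
      induction n with
      | zero =>
        constructor
        · simpa [ha] using hK0
        · intro s hs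
          have : a 0 = K0 := by simp [ha]
          rw [this]
          exact hP0 s hs
      | succ n ih =>
        have h1 := hboot r0 hr0 (a n) ih.1 ih.2
        constructor
        · rw [← hastep n]
          have := mul_nonneg hpq0 ih.1
          nlinarith [mul_nonneg (mul_nonneg hp.le (by linarith : (0:ℝ) ≤ q)) ih.1]
        · intro s hs
          rw [← hastep n]
          exact h1 s hs
    have hlim : Filter.Tendsto a Filter.atTop (nhds M) := by
      have h2 : Filter.Tendsto (fun n : ℕ => (p*q)^n) Filter.atTop (nhds 0) :=
        tendsto_pow_atTop_nhds_zero_of_lt_one hpq0 hpq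
      have h3 := (h2.mul_const (K0 - M)).const_add M
      simpa [ha] using h3
    intro s hs
    have h3 : Filter.Tendsto (fun n => a n * v s) Filter.atTop (nhds (M * v s)) :=
      hlim.mul_const _
    exact ge_of_tendsto h3 (Filter.Eventually.of_forall fun n => (haM n).2 s hs)

  -- final assembly
  intro r hr
  have hrI : r ∈ Ioi (0:ℝ) := hr
  have hvr := hvpos r hr.le
  have hur := hu'pos r hrI
  have hvr' := hv'pos r hrI
  have hYr : r * deriv v r ≤ M * v r := hYM r hr r ⟨hr, le_rfl⟩
  have hZup := hB r hr M hMnn (hYM r hr) r ⟨hr, le_rfl⟩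
  have hWup := hD r hr M hMnn (hYM r hr) r ⟨hr, le_rfl⟩
  refine ⟨⟨?_, ?_⟩, ⟨?_, ?_⟩, ⟨?_, ?_⟩⟩
  · exact div_nonneg (mul_nonneg hr.le hvr'.le) hvr.le
  · rw [div_le_iff₀ hvr]
    exact hYr
  · rw [le_div_iff₀ hur]
    have := hZ1 r hrI
    linarith
  · rw [div_le_iff₀ hur]
    have e : c + p*M = c + p * (2 + q) / (1 - p * q) := by
      rw [hM]; ring
    rw [← e]
    exact hZup
  · rw [le_div_iff₀ hvr']
    have := hW1 r hrI
    linarith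
  · rw [div_le_iff₀ hvr']
    have e : c + q*(1+p*M) = c - 2 + M := by
      have hX : (2+q)/(1-p*q) * (1-p*q) = 2+q := div_mul_cancel₀ _ h1pq.ne'
      rw [hM]; linear_combination -hX
    rw [← e]
    exact hWup
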